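/- arXiv:2407.19217 — 6 statements merged into one kernel-verified Lean document; each statement's English description precedes it below -/
import Mathlib

section
/- Let $n, m \ge 1$, let $K$ be a real $n\times n$ matrix, $\omega \in \mathbb{R}^n$, and $N_b$ a real $n\times m$ matrix. Suppose the $(n+1)\times(n+1)$ block matrix $K_e = \begin{pmatrix} K & \omega \\ \omega^T & 0 \end{pmatrix}$ is invertible. Define the $(n+1)\times(m+1)$ block matrices $Z_e = \begin{pmatrix} 0 & \omega \\ 0 & 0 \end{pmatrix}$ (with top-left block the $n\times m$ zero matrix and top-right column $\omega$) and $N_{be} = \begin{pmatrix} N_b & 0 \\ 0 & 0 \end{pmatrix}$. Then $Z_e^T K_e^{-1} N_{be} = 0$ (the $(m+1)\times(m+1)$ zero matrix). -/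
open Matrix

theorem stmt_2 (n m : ℕ) (hn : 1 ≤ n) (hm : 1 ≤ m)
    (K : Matrix (Fin n) (Fin n) ℝ) (ω : Fin n → ℝ)
    (Nb : Matrix (Fin n) (Fin m) ℝ)
    (Ke : Matrix (Fin n ⊕ Fin 1) (Fin n ⊕ Fin 1) ℝ)
    (hKe : Ke = Matrix.fromBlocks K (Matrix.replicateCol (Fin 1) ω) (Matrix.replicateRow (Fin 1) ω) 0)
    (hKeInv : IsUnit Ke)
    (Ze Nbe : Matrix (Fin n ⊕ Fin 1) (Fin m ⊕ Fin 1) ℝ)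
    (hZe : Ze = Matrix.fromBlocks 0 (Matrix.replicateCol (Fin 1) ω) 0 0)
    (hNbe : Nbe = Matrix.fromBlocks Nb 0 0 0) :
    Zeᵀ * Ke⁻¹ * Nbe = 0 := by
  have hT : Zeᵀ = (Matrix.fromBlocks 0 0 0 1 :
      Matrix (Fin m ⊕ Fin 1) (Fin n ⊕ Fin 1) ℝ) * Ke := by
    subst hZe hKe
    simp [Matrix.fromBlocks_transpose, Matrix.transpose_replicateCol, Matrix.fromBlocks_multiply]
  rw [hT, Matrix.mul_assoc, Matrix.mul_assoc,
    Matrix.mul_nonsing_inv_cancel_left _ _ ((Matrix.isUnit_iff_isUnit_det Ke).mp hKeInv), hNbe]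
  simp [Matrix.fromBlocks_multiply]
end

section
/- Let $A$ be an invertible real $k\times k$ matrix, $B$ a real $k\times l$ matrix, $C$ a real $l\times k$ matrix, and $D$ a real $l\times l$ matrix, and suppose the Schur complement $S = D - CA^{-1}B$ is invertible. Set $\mathcal{A} = \begin{pmatrix} A & B \\ C & D \end{pmatrix}$ and $\mathcal{P}_2 = \begin{pmatrix} A & B \\ 0 & S \end{pmatrix}$. Then $\mathcal{P}_2$ is invertible and $(\mathcal{P}_2^{-1}\mathcal{A} - I)^2 = 0$; that is, the preconditioned matrix $\mathcal{P}_2^{-1}\mathcal{A}$ satisfies the polynomial $p_2(t) = (t-1)^2$. -/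
open Matrix

theorem stmt_5 (k l : ℕ)
    (A : Matrix (Fin k) (Fin k) ℝ) (hA : IsUnit A)
    (B : Matrix (Fin k) (Fin l) ℝ) (C : Matrix (Fin l) (Fin k) ℝ)
    (D : Matrix (Fin l) (Fin l) ℝ)
    (S : Matrix (Fin l) (Fin l) ℝ) (hSdef : S = D - C * A⁻¹ * B) (hS : IsUnit S)
    (calA P2 : Matrix (Fin k ⊕ Fin l) (Fin k ⊕ Fin l) ℝ)
    (hcalA : calA = Matrix.fromBlocks A B C D)
    (hP2 : P2 = Matrix.fromBlocks A B 0 S) :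
    IsUnit P2 ∧ (P2⁻¹ * calA - 1) ^ 2 = 0 := by
  have hAd : IsUnit A.det := (Matrix.isUnit_iff_isUnit_det A).mp hA
  have hSd : IsUnit S.det := (Matrix.isUnit_iff_isUnit_det S).mp hS
  have hAi : A * A⁻¹ = 1 := Matrix.mul_nonsing_inv A hAd
  have hAi' : A⁻¹ * A = 1 := Matrix.nonsing_inv_mul A hAd
  have hSi : S * S⁻¹ = 1 := Matrix.mul_nonsing_inv S hSd
  have hSi' : S⁻¹ * S = 1 := Matrix.nonsing_inv_mul S hSd
  have hP2unit : IsUnit P2 := by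
    rw [Matrix.isUnit_iff_isUnit_det, hP2, Matrix.det_fromBlocks_zero₂₁]
    exact hAd.mul hSd
  refine ⟨hP2unit, ?_⟩
  have hQ : P2⁻¹ = Matrix.fromBlocks A⁻¹ (-(A⁻¹ * B * S⁻¹)) 0 S⁻¹ := by
    apply Matrix.inv_eq_right_inv
    rw [hP2, Matrix.fromBlocks_multiply]
    simp only [Matrix.mul_zero, Matrix.zero_mul, add_zero, zero_add, hAi, hSi,
      Matrix.mul_neg, ← Matrix.mul_assoc, Matrix.one_mul]
    simp only [Matrix.mul_assoc, hSi, Matrix.mul_one, neg_add_cancel, neg_zero,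
      zero_add]
    rw [← Matrix.fromBlocks_one]
  have hK : S⁻¹ * D = 1 + S⁻¹ * (C * (A⁻¹ * B)) := by
    have h : S⁻¹ * (D - C * A⁻¹ * B) = 1 := by rw [← hSdef]; exact hSi'
    rw [Matrix.mul_sub, sub_eq_iff_eq_add] at h
    rw [h, Matrix.mul_assoc, add_comm]
  rw [hQ, hcalA, Matrix.fromBlocks_multiply, pow_two, ← Matrix.fromBlocks_one,
    sub_eq_add_neg, Matrix.fromBlocks_neg, Matrix.fromBlocks_add,
    Matrix.fromBlocks_multiply]
  have hz : (0 : Matrix (Fin k ⊕ Fin l) (Fin k ⊕ Fin l) ℝ) =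
      Matrix.fromBlocks 0 0 0 0 := by
    simp
  have h1 : ∀ {m : ℕ} (X : Matrix (Fin k) (Fin m) ℝ), A⁻¹ * (A * X) = X := by
    intro m X; rw [← Matrix.mul_assoc, hAi', Matrix.one_mul]
  have hK2 : ∀ {m : ℕ} (X : Matrix (Fin l) (Fin m) ℝ),
      S⁻¹ * (D * X) = X + S⁻¹ * (C * (A⁻¹ * (B * X))) := by
    intro m X
    rw [← Matrix.mul_assoc, hK, Matrix.add_mul, Matrix.one_mul]
    simp [Matrix.mul_assoc]
  rw [hz, Matrix.fromBlocks_inj]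
  refine ⟨?_, ?_, ?_, ?_⟩ <;>
    simp only [Matrix.zero_mul, Matrix.mul_zero, add_zero, zero_add, neg_zero,
      sub_eq_add_neg, Matrix.mul_add, Matrix.add_mul, Matrix.neg_mul,
      Matrix.mul_neg, Matrix.one_mul, Matrix.mul_one, Matrix.mul_assoc,
      hAi', h1, hK, hK2, neg_neg, neg_add_rev] <;> abel
end

section
/- Let $A$ be an invertible real $k\times k$ matrix and $B$ a real $k\times l$ matrix such that $S_0 := B^T A^{-1} B$ is invertible. Set the saddle point matrix $\mathcal{A} = \begin{pmatrix} A & B \\ B^T & 0 \end{pmatrix}$ and the block diagonal preconditioner $\mathcal{P}_1 = \begin{pmatrix} A & 0 \\ 0 & S_0 \end{pmatrix}$. Then $\mathcal{P}_1$ is invertible and the preconditioned matrix $T = \mathcal{P}_1^{-1}\mathcal{A}$ satisfies $T\,(T - I)\,(T^2 - T - I) = 0$; that is, $T$ is annihilated by the polynomial $p_1(t) = t(t-1)(t^2 - t - 1)$. -/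
open Matrix

theorem stmt_6 (k l : ℕ)
    (A : Matrix (Fin k) (Fin k) ℝ) (hA : IsUnit A)
    (B : Matrix (Fin k) (Fin l) ℝ)
    (S0 : Matrix (Fin l) (Fin l) ℝ) (hS0def : S0 = Bᵀ * A⁻¹ * B) (hS0 : IsUnit S0)
    (calA P1 : Matrix (Fin k ⊕ Fin l) (Fin k ⊕ Fin l) ℝ)
    (hcalA : calA = Matrix.fromBlocks A B Bᵀ 0)
    (hP1 : P1 = Matrix.fromBlocks A 0 0 S0) :
    IsUnit P1 ∧
      (P1⁻¹ * calA) * (P1⁻¹ * calA - 1) * ((P1⁻¹ * calA) ^ 2 - P1⁻¹ * calA - 1) = 0 := by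
  have hAd : IsUnit A.det := (Matrix.isUnit_iff_isUnit_det A).mp hA
  have hSd : IsUnit S0.det := (Matrix.isUnit_iff_isUnit_det S0).mp hS0
  have hP1u : IsUnit P1 := by
    rw [hP1]
    exact Matrix.isUnit_fromBlocks_zero₂₁.mpr ⟨hA, hS0⟩
  refine ⟨hP1u, ?_⟩
  have hP1inv : P1⁻¹ = Matrix.fromBlocks A⁻¹ 0 0 S0⁻¹ := by
    apply Matrix.inv_eq_right_inv
    rw [hP1]
    simp [Matrix.fromBlocks_multiply, Matrix.mul_nonsing_inv _ hAd,
      Matrix.mul_nonsing_inv _ hSd, ← Matrix.fromBlocks_one]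
  set X := A⁻¹ * B with hX
  set Y := S0⁻¹ * Bᵀ with hY
  have hYX : Y * X = 1 := by
    rw [hY, hX, Matrix.mul_assoc, ← Matrix.mul_assoc Bᵀ, ← hS0def,
      Matrix.nonsing_inv_mul _ hSd]
  have hT : P1⁻¹ * calA = Matrix.fromBlocks 1 X Y 0 := by
    rw [hP1inv, hcalA]
    simp [Matrix.fromBlocks_multiply, Matrix.nonsing_inv_mul _ hAd, hX, hY]
  rw [hT, pow_two]
  have h1 : (1 : Matrix (Fin k ⊕ Fin l) (Fin k ⊕ Fin l) ℝ) =
      Matrix.fromBlocks 1 0 0 1 := Matrix.fromBlocks_one.symm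
  rw [h1]
  simp only [sub_eq_add_neg, Matrix.fromBlocks_neg, Matrix.fromBlocks_add, Matrix.fromBlocks_multiply]
  simp only [Matrix.mul_zero, Matrix.zero_mul, Matrix.mul_one, Matrix.one_mul,
    add_zero, zero_add, sub_zero, zero_sub, sub_self, hYX]
  have hXYXY : X * Y * (X * Y) = X * Y := by
    rw [Matrix.mul_assoc X Y (X * Y), ← Matrix.mul_assoc Y X Y, hYX, Matrix.one_mul]
  have key : X * Y * (X * Y + -1) = 0 := by rw [mul_add, hXYXY]; simp
  ext (i|i) (j|j) <;> simp [Matrix.fromBlocks, key]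
end

section
/- Let $n, m \ge 1$. Let $K, M$ be real $n\times n$ matrices, $\omega \in \mathbb{R}^n$, $N_b$ a real $n\times m$ matrix, $M_b$ a real $m\times m$ matrix, and $\beta, s \in \mathbb{R}$. Define $K_e = \begin{pmatrix} K & \omega \\ \omega^T & 0 \end{pmatrix}$, $M_e = \begin{pmatrix} M & 0 \\ 0 & 0 \end{pmatrix}$ (both $(n+1)\times(n+1)$), $Z_e = \begin{pmatrix} 0 & \omega \\ 0 & 0 \end{pmatrix}$, $N_{be} = \begin{pmatrix} N_b & 0 \\ 0 & 0 \end{pmatrix}$ (both $(n+1)\times(m+1)$), and $M_{be} = \begin{pmatrix} \beta M_b & 0 \\ 0 & s \end{pmatrix}$ ($(m+1)\times(m+1)$). Assume $K_e$ is invertible, $\beta M_b$ is invertible, and $s \ne 0$. Define the Schur complement $S = \begin{pmatrix} M_{be} + Z_e^T K_e^{-1} N_{be} & -N_{be}^T \\ Z_e + M_e K_e^{-1} N_{be} & K_e \end{pmatrix}$ and its approximation $\widehat{S} = \begin{pmatrix} M_{be} & -N_{be}^T \\ 0 & K_e \end{pmatrix}$, both of size $(n+m+2)\times(n+m+2)$.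 Suppose $\mu \in \mathbb{R}$ with $\mu \ne 1$ and $x = (x_1, x_2)$ with $x_1 \in \mathbb{R}^{m+1}$, $x_2 \in \mathbb{R}^{n+1}$, $x_2 \ne 0$, satisfy $S x = \mu \widehat{S} x$. Then $\mu = 1 + \dfrac{x_2^T \left(K_e^{-1} M_e K_e^{-1} N_{be} M_{be}^{-1} N_{be}^T\right) x_2}{x_2^T x_2}$. -/
open Matrix

theorem stmt_9 (n m : ℕ) (hn : 1 ≤ n) (hm : 1 ≤ m)
    (K M : Matrix (Fin n) (Fin n) ℝ) (ω : Fin n → ℝ)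
    (Nb : Matrix (Fin n) (Fin m) ℝ) (Mb : Matrix (Fin m) (Fin m) ℝ)
    (β s : ℝ)
    (Ke Me : Matrix (Fin n ⊕ Fin 1) (Fin n ⊕ Fin 1) ℝ)
    (hKe : Ke = Matrix.fromBlocks K (Matrix.replicateCol (Fin 1) ω) (Matrix.replicateRow (Fin 1) ω) 0)
    (hMe : Me = Matrix.fromBlocks M 0 0 0)
    (Ze Nbe : Matrix (Fin n ⊕ Fin 1) (Fin m ⊕ Fin 1) ℝ)
    (hZe : Ze = Matrix.fromBlocks 0 (Matrix.replicateCol (Fin 1) ω) 0 0)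
    (hNbe : Nbe = Matrix.fromBlocks Nb 0 0 0)
    (Mbe : Matrix (Fin m ⊕ Fin 1) (Fin m ⊕ Fin 1) ℝ)
    (hMbe : Mbe = Matrix.fromBlocks (β • Mb) 0 0 (s • (1 : Matrix (Fin 1) (Fin 1) ℝ)))
    (hKeInv : IsUnit Ke) (hMbInv : IsUnit (β • Mb)) (hs : s ≠ 0)
    (S Shat : Matrix ((Fin m ⊕ Fin 1) ⊕ (Fin n ⊕ Fin 1))
                     ((Fin m ⊕ Fin 1) ⊕ (Fin n ⊕ Fin 1)) ℝ)
    (hS : S = Matrix.fromBlocks (Mbe + Zeᵀ * Ke⁻¹ * Nbe) (-Nbeᵀ)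
                (Ze + Me * Ke⁻¹ * Nbe) Ke)
    (hShat : Shat = Matrix.fromBlocks Mbe (-Nbeᵀ) 0 Ke)
    (μ : ℝ) (hμ : μ ≠ 1)
    (x1 : Fin m ⊕ Fin 1 → ℝ) (x2 : Fin n ⊕ Fin 1 → ℝ) (hx2 : x2 ≠ 0)
    (heig : S.mulVec (Sum.elim x1 x2) = μ • Shat.mulVec (Sum.elim x1 x2)) :
    μ = 1 + (x2 ⬝ᵥ (Ke⁻¹ * Me * Ke⁻¹ * Nbe * Mbe⁻¹ * Nbeᵀ).mulVec x2) / (x2 ⬝ᵥ x2) := by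
  have hdet : IsUnit Ke.det := (Matrix.isUnit_iff_isUnit_det Ke).mp hKeInv
  have hKeKi : Ke * Ke⁻¹ = 1 := Matrix.mul_nonsing_inv Ke hdet
  have hKiKe : Ke⁻¹ * Ke = 1 := Matrix.nonsing_inv_mul Ke hdet
  have hMbdet : IsUnit (β • Mb).det := (Matrix.isUnit_iff_isUnit_det _).mp hMbInv
  have hMbeInvEq : Mbe⁻¹ = Matrix.fromBlocks (β • Mb)⁻¹ 0 0 (s⁻¹ • 1) := by
    apply Matrix.inv_eq_right_inv
    rw [hMbe, Matrix.fromBlocks_multiply]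
    simp only [Matrix.fromBlocks_inj, Matrix.mul_nonsing_inv _ hMbdet, Matrix.zero_mul,
      Matrix.mul_zero, smul_mul_smul_comm, mul_inv_cancel₀ hs, one_mul, one_smul, add_zero, zero_add]
    rw [← Matrix.fromBlocks_one]
  have hMbeiMbe : Mbe⁻¹ * Mbe = 1 := by
    rw [hMbeInvEq, hMbe, Matrix.fromBlocks_multiply]
    simp only [Matrix.fromBlocks_inj, Matrix.nonsing_inv_mul _ hMbdet, Matrix.zero_mul,
      Matrix.mul_zero, smul_mul_smul_comm, inv_mul_cancel₀ hs, one_mul, one_smul, add_zero, zero_add]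
    rw [← Matrix.fromBlocks_one]
  -- identity 1 : Zeᵀ * Ke⁻¹ * Nbe = 0
  have hZt : Zeᵀ = (Matrix.fromBlocks (0 : Matrix (Fin m) (Fin n) ℝ) 0 0 1 : Matrix (Fin m ⊕ Fin 1) (Fin n ⊕ Fin 1) ℝ) * Ke := by
    rw [hZe, hKe, Matrix.fromBlocks_multiply, Matrix.fromBlocks_transpose]
    simp
  have hI1 : Zeᵀ * Ke⁻¹ * Nbe = 0 := by
    rw [hZt, Matrix.mul_assoc (Matrix.fromBlocks 0 0 0 1), hKeKi, Matrix.mul_one,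
      hNbe, Matrix.fromBlocks_multiply]
    simp
  -- identity 2 : Ze * Mbe⁻¹ * Nbeᵀ = 0
  have hI2 : Ze * Mbe⁻¹ * Nbeᵀ = 0 := by
    rw [hZe, hMbeInvEq, hNbe, Matrix.fromBlocks_multiply, Matrix.fromBlocks_transpose,
      Matrix.fromBlocks_multiply]
    simp
  rw [hS, hShat, Matrix.fromBlocks_mulVec, Matrix.fromBlocks_mulVec] at heig
  have h1 : (Mbe + Zeᵀ * Ke⁻¹ * Nbe).mulVec x1 + (-Nbeᵀ).mulVec x2
      = μ • (Mbe.mulVec x1 + (-Nbeᵀ).mulVec x2) := by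
    funext i
    have := congrFun heig (Sum.inl i)
    simpa using this
  have h2 : (Ze + Me * Ke⁻¹ * Nbe).mulVec x1 + Ke.mulVec x2
      = μ • ((0 : Matrix _ _ ℝ).mulVec x1 + Ke.mulVec x2) := by
    funext i
    have := congrFun heig (Sum.inr i)
    simpa using this
  rw [hI1, add_zero] at h1
  rw [Matrix.zero_mulVec, zero_add] at h2
  -- from h1 with μ ≠ 1 : Mbe x1 = Nbeᵀ x2
  have h1' : Mbe.mulVec x1 + (-Nbeᵀ).mulVec x2 = 0 := by
    have h : (1 - μ) • (Mbe.mulVec x1 + (-Nbeᵀ).mulVec x2) = 0 := by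
      rw [sub_smul, one_smul, ← h1, sub_self]
    have hne : (1 - μ) ≠ 0 := sub_ne_zero.mpr (Ne.symm hμ)
    exact (smul_eq_zero.mp h).resolve_left hne
  have hM : Mbe.mulVec x1 = Nbeᵀ.mulVec x2 := by
    apply eq_of_sub_eq_zero
    rw [sub_eq_add_neg, ← Matrix.neg_mulVec]
    exact h1'
  have hx1 : x1 = Mbe⁻¹.mulVec (Nbeᵀ.mulVec x2) := by
    calc x1 = (Mbe⁻¹ * Mbe).mulVec x1 := by rw [hMbeiMbe, Matrix.one_mulVec]
    _ = Mbe⁻¹.mulVec (Mbe.mulVec x1) := by rw [Matrix.mulVec_mulVec]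
    _ = Mbe⁻¹.mulVec (Nbeᵀ.mulVec x2) := by rw [hM]
  -- from h2 : (Me Ke⁻¹ Nbe Mbe⁻¹ Nbeᵀ) x2 = (μ - 1) • Ke x2
  have h2' : (Me * Ke⁻¹ * Nbe * Mbe⁻¹ * Nbeᵀ).mulVec x2 = (μ - 1) • Ke.mulVec x2 := by
    have hZex1 : Ze.mulVec x1 = 0 := by
      rw [hx1, Matrix.mulVec_mulVec, Matrix.mulVec_mulVec, hI2, Matrix.zero_mulVec]
    have hMKN : (Me * Ke⁻¹ * Nbe).mulVec x1 = (Me * Ke⁻¹ * Nbe * Mbe⁻¹ * Nbeᵀ).mulVec x2 := by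
      rw [hx1, Matrix.mulVec_mulVec, Matrix.mulVec_mulVec, Matrix.mul_assoc,
        Matrix.mul_assoc]
    have h := h2
    rw [Matrix.add_mulVec, hZex1, zero_add, hMKN] at h
    rw [sub_smul, one_smul, ← h]
    abel
  have hfin : (Ke⁻¹ * Me * Ke⁻¹ * Nbe * Mbe⁻¹ * Nbeᵀ).mulVec x2 = (μ - 1) • x2 := by
    have h := congrArg (fun v => Ke⁻¹.mulVec v) h2'
    simp only [Matrix.mulVec_mulVec, Matrix.mulVec_smul] at h
    rw [hKiKe, Matrix.one_mulVec] at h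
    rw [show Ke⁻¹ * Me * Ke⁻¹ * Nbe * Mbe⁻¹ * Nbeᵀ
        = Ke⁻¹ * (Me * Ke⁻¹ * Nbe * Mbe⁻¹ * Nbeᵀ) by simp only [Matrix.mul_assoc]]
    exact h
  have hdot : x2 ⬝ᵥ (Ke⁻¹ * Me * Ke⁻¹ * Nbe * Mbe⁻¹ * Nbeᵀ).mulVec x2
      = (μ - 1) * (x2 ⬝ᵥ x2) := by
    rw [hfin, dotProduct_smul, smul_eq_mul]
  have hxx : x2 ⬝ᵥ x2 ≠ 0 := fun h => hx2 (dotProduct_self_eq_zero.mp h)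
  rw [hdot]
  field_simp
  ring
end

section
/- Let $n, m \ge 1$. Let $K$ be a real symmetric $n\times n$ matrix, $M$ a real symmetric positive semidefinite $n\times n$ matrix, $\omega \in \mathbb{R}^n$, $N_b$ a real $n\times m$ matrix, $M_b$ a real symmetric positive definite $m\times m$ matrix, $\beta > 0$, and $s > 0$. Define $K_e = \begin{pmatrix} K & \omega \\ \omega^T & 0 \end{pmatrix}$, $M_e = \begin{pmatrix} M & 0 \\ 0 & 0 \end{pmatrix}$, $Z_e = \begin{pmatrix} 0 & \omega \\ 0 & 0 \end{pmatrix}$, $N_{be} = \begin{pmatrix} N_b & 0 \\ 0 & 0 \end{pmatrix}$, $M_{be} = \begin{pmatrix} \beta M_b & 0 \\ 0 & s \end{pmatrix}$, and assume $K_e$ is invertible. Define $S = \begin{pmatrix} M_{be} + Z_e^T K_e^{-1} N_{be} & -N_{be}^T \\ Z_e + M_e K_e^{-1} N_{be} & K_e \end{pmatrix}$ and $\widehat{S} = \begin{pmatrix} M_{be} & -N_{be}^T \\ 0 & K_e \end{pmatrix}$. Then every real generalized eigenvalue of the pencil $(S, \widehat{S})$ satisfies $\mu \ge 1$: if $\mu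 \in \mathbb{R}$ and $x \ne 0$ satisfy $S x = \mu \widehat{S} x$, then $\mu \ge 1$. -/
open Matrix

theorem stmt_10 (n m : ℕ) (hn : 1 ≤ n) (hm : 1 ≤ m)
    (K M : Matrix (Fin n) (Fin n) ℝ) (hKsymm : Kᵀ = K)
    (hMsymm : Mᵀ = M) (hMpsd : ∀ x : Fin n → ℝ, 0 ≤ x ⬝ᵥ M.mulVec x)
    (ω : Fin n → ℝ)
    (Nb : Matrix (Fin n) (Fin m) ℝ) (Mb : Matrix (Fin m) (Fin m) ℝ)
    (hMbsymm : Mbᵀ = Mb)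
    (hMbpd : ∀ x : Fin m → ℝ, x ≠ 0 → 0 < x ⬝ᵥ Mb.mulVec x)
    (β s : ℝ) (hβ : 0 < β) (hs : 0 < s)
    (Ke Me : Matrix (Fin n ⊕ Fin 1) (Fin n ⊕ Fin 1) ℝ)
    (hKe : Ke = Matrix.fromBlocks K (Matrix.replicateCol (Fin 1) ω) (Matrix.replicateRow (Fin 1) ω) 0)
    (hMe : Me = Matrix.fromBlocks M 0 0 0)
    (Ze Nbe : Matrix (Fin n ⊕ Fin 1) (Fin m ⊕ Fin 1) ℝ)
    (hZe : Ze = Matrix.fromBlocks 0 (Matrix.replicateCol (Fin 1) ω) 0 0)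
    (hNbe : Nbe = Matrix.fromBlocks Nb 0 0 0)
    (Mbe : Matrix (Fin m ⊕ Fin 1) (Fin m ⊕ Fin 1) ℝ)
    (hMbe : Mbe = Matrix.fromBlocks (β • Mb) 0 0 (s • (1 : Matrix (Fin 1) (Fin 1) ℝ)))
    (hKeInv : IsUnit Ke)
    (S Shat : Matrix ((Fin m ⊕ Fin 1) ⊕ (Fin n ⊕ Fin 1))
                     ((Fin m ⊕ Fin 1) ⊕ (Fin n ⊕ Fin 1)) ℝ)
    (hS : S = Matrix.fromBlocks (Mbe + Zeᵀ * Ke⁻¹ * Nbe) (-Nbeᵀ)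
                (Ze + Me * Ke⁻¹ * Nbe) Ke)
    (hShat : Shat = Matrix.fromBlocks Mbe (-Nbeᵀ) 0 Ke) :
    ∀ (μ : ℝ) (x : (Fin m ⊕ Fin 1) ⊕ (Fin n ⊕ Fin 1) → ℝ), x ≠ 0 →
      S.mulVec x = μ • Shat.mulVec x → 1 ≤ μ := by
  intro μ x hx heq
  by_contra hlt
  push_neg at hlt
  have hμ1 : μ - 1 ≠ 0 := by intro h; nlinarith
  -- basic facts about Ke
  have hdet : IsUnit Ke.det := (Matrix.isUnit_iff_isUnit_det Ke).mp hKeInv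
  have hKK : Ke * Ke⁻¹ = 1 := Matrix.mul_nonsing_inv Ke hdet
  have hKK' : Ke⁻¹ * Ke = 1 := Matrix.nonsing_inv_mul Ke hdet
  have hKeSymm : Keᵀ = Ke := by
    rw [hKe]
    simp [Matrix.fromBlocks_transpose, hKsymm, Matrix.transpose_replicateCol, Matrix.transpose_replicateRow]
  -- the key identity Zeᵀ * Ke⁻¹ * Nbe = 0
  set Q : Matrix (Fin m ⊕ Fin 1) (Fin n ⊕ Fin 1) ℝ := Matrix.fromBlocks 0 0 0 1 with hQdef
  have hQ : Zeᵀ = Q * Ke := by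
    rw [hZe, hKe, hQdef]
    simp [Matrix.fromBlocks_transpose, Matrix.fromBlocks_multiply]
  have hQN : Q * Nbe = 0 := by
    rw [hNbe, hQdef]
    simp [Matrix.fromBlocks_multiply]
  have hZKN : Zeᵀ * Ke⁻¹ * Nbe = 0 := by
    calc Zeᵀ * Ke⁻¹ * Nbe = Q * (Ke * Ke⁻¹) * Nbe := by
          rw [hQ, Matrix.mul_assoc Q Ke Ke⁻¹]
    _ = Q * Nbe := by rw [hKK, Matrix.mul_one]
    _ = 0 := hQN
  have hS' : S = Matrix.fromBlocks Mbe (-Nbeᵀ) (Ze + Me * Ke⁻¹ * Nbe) Ke := by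
    rw [hS, hZKN, add_zero]
  -- split x into blocks
  set u : (Fin m ⊕ Fin 1) → ℝ := x ∘ Sum.inl with hu
  set v : (Fin n ⊕ Fin 1) → ℝ := x ∘ Sum.inr with hv
  have hxe : x = Sum.elim u v := (Sum.elim_comp_inl_inr x).symm
  rw [hS', hShat, hxe, Matrix.fromBlocks_mulVec, Matrix.fromBlocks_mulVec] at heq
  have h1 : Mbe.mulVec u + (-Nbeᵀ).mulVec v
      = μ • (Mbe.mulVec u + (-Nbeᵀ).mulVec v) := by
    funext i; simpa using congrFun heq (Sum.inl i)
  have h2 : (Ze + Me * Ke⁻¹ * Nbe).mulVec u + Ke.mulVec v = μ • Ke.mulVec v := by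
    funext i; simpa using congrFun heq (Sum.inr i)
  -- from h1 : Mbe u = Nbeᵀ v
  have h1' : Mbe.mulVec u = Nbeᵀ.mulVec v := by
    have h0 : (1 - μ) • (Mbe.mulVec u + (-Nbeᵀ).mulVec v) = 0 := by
      rw [sub_smul, one_smul, ← h1, sub_self]
    have h0' : Mbe.mulVec u + (-Nbeᵀ).mulVec v = 0 := by
      rcases smul_eq_zero.mp h0 with h | h
      · exact absurd (by linarith [sub_eq_zero.mp (by linarith [h] : (1:ℝ) - μ = 0)] : μ - 1 = 0) hμ1
      · exact h
    rw [Matrix.neg_mulVec] at h0'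
    exact add_neg_eq_zero.mp h0'
  -- from h2
  have h2' : (Ze + Me * Ke⁻¹ * Nbe).mulVec u = (μ - 1) • Ke.mulVec v := by
    have : (Ze + Me * Ke⁻¹ * Nbe).mulVec u = μ • Ke.mulVec v - Ke.mulVec v := by
      rw [← h2]; abel
    rw [this, sub_smul, one_smul]
  by_cases hu0 : u = 0
  · -- then v = 0 too, contradiction with x ≠ 0
    have hKv : (μ - 1) • Ke.mulVec v = 0 := by
      rw [← h2', hu0, Matrix.mulVec_zero]
    have hKv0 : Ke.mulVec v = 0 := by
      rcases smul_eq_zero.mp hKv with h | h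
      · exact absurd h hμ1
      · exact h
    have hv0 : v = 0 := by
      have : (Ke⁻¹ * Ke).mulVec v = Ke⁻¹.mulVec 0 := by
        rw [← Matrix.mulVec_mulVec, hKv0]
      rwa [hKK', Matrix.one_mulVec, Matrix.mulVec_zero] at this
    apply hx
    rw [hxe, hu0, hv0]
    funext i; cases i <;> simp
  · -- main case : u ≠ 0
    set w : (Fin n ⊕ Fin 1) → ℝ := (Ke⁻¹ * Nbe).mulVec u with hw
    -- w ⬝ Ze u = 0
    have hwZ : w ⬝ᵥ Ze.mulVec u = 0 := by
      rw [Matrix.dotProduct_mulVec, ← Matrix.mulVec_transpose, hw,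
        Matrix.mulVec_mulVec, ← Matrix.mul_assoc, hZKN]
      simp
    -- Me Ke⁻¹ Nbe u = Me w
    have hMew : (Me * Ke⁻¹ * Nbe).mulVec u = Me.mulVec w := by
      rw [hw, Matrix.mulVec_mulVec, Matrix.mul_assoc]
    -- Ke w = Nbe u
    have hKew : Ke.mulVec w = Nbe.mulVec u := by
      rw [hw, Matrix.mulVec_mulVec, ← Matrix.mul_assoc, hKK, Matrix.one_mul]
    -- dot h2' with w
    have key : w ⬝ᵥ Me.mulVec w = (μ - 1) * (u ⬝ᵥ Mbe.mulVec u) := by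
      have hdot := congrArg (fun y => w ⬝ᵥ y) h2'
      simp only [Matrix.add_mulVec, dotProduct_add, hMew,
        dotProduct_smul, smul_eq_mul] at hdot
      rw [hwZ, zero_add] at hdot
      rw [hdot]
      congr 1
      -- w ⬝ᵥ Ke v = u ⬝ᵥ Mbe u
      rw [Matrix.dotProduct_mulVec w Ke v, ← Matrix.mulVec_transpose, hKeSymm, hKew]
      rw [h1', Matrix.dotProduct_mulVec u Nbeᵀ v, Matrix.vecMul_transpose]
    -- w ⬝ᵥ Me w ≥ 0
    have hMe0 : 0 ≤ w ⬝ᵥ Me.mulVec w := by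
      have hwe : w = Sum.elim (w ∘ Sum.inl) (w ∘ Sum.inr) := (Sum.elim_comp_inl_inr w).symm
      rw [hMe, hwe, Matrix.fromBlocks_mulVec, sumElim_dotProduct_sumElim]
      simpa using hMpsd (w ∘ Sum.inl)
    -- u ⬝ᵥ Mbe u > 0
    have hMbe0 : 0 < u ⬝ᵥ Mbe.mulVec u := by
      have hue : u = Sum.elim (u ∘ Sum.inl) (u ∘ Sum.inr) := (Sum.elim_comp_inl_inr u).symm
      rw [hMbe, hue, Matrix.fromBlocks_mulVec, sumElim_dotProduct_sumElim]
      simp only [Matrix.zero_mulVec, add_zero, zero_add, Matrix.smul_mulVec,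
        Matrix.one_mulVec, dotProduct_smul, smul_eq_mul,
        Sum.elim_comp_inl, Sum.elim_comp_inr]
      have ht1 : 0 ≤ (u ∘ Sum.inl) ⬝ᵥ Mb.mulVec (u ∘ Sum.inl) := by
        by_cases h : (u ∘ Sum.inl) = 0
        · rw [h]; simp
        · exact le_of_lt (hMbpd _ h)
      have ht2 : 0 ≤ (u ∘ Sum.inr) ⬝ᵥ (u ∘ Sum.inr) :=
        Finset.sum_nonneg fun i _ => mul_self_nonneg _
      by_cases h : (u ∘ Sum.inl) = 0
      · have h2' : (u ∘ Sum.inr) ≠ 0 := by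
          intro h2
          apply hu0
          funext i
          cases i with
          | inl i => exact congrFun h i
          | inr i => exact congrFun h2 i
        have hne : (u ∘ Sum.inr) ⬝ᵥ (u ∘ Sum.inr) ≠ 0 :=
          fun hz => h2' (dotProduct_self_eq_zero.mp hz)
        have hpos : 0 < (u ∘ Sum.inr) ⬝ᵥ (u ∘ Sum.inr) := lt_of_le_of_ne ht2 (Ne.symm hne)
        have hb : 0 ≤ β * ((u ∘ Sum.inl) ⬝ᵥ Mb.mulVec (u ∘ Sum.inl)) := mul_nonneg hβ.le ht1
        have hsp : 0 < s * ((u ∘ Sum.inr) ⬝ᵥ (u ∘ Sum.inr)) := mul_pos hs hpos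
        linarith
      · have hb : 0 < β * ((u ∘ Sum.inl) ⬝ᵥ Mb.mulVec (u ∘ Sum.inl)) := mul_pos hβ (hMbpd _ h)
        have hsp : 0 ≤ s * ((u ∘ Sum.inr) ⬝ᵥ (u ∘ Sum.inr)) := mul_nonneg hs.le ht2
        linarith
    have hfin : 0 < (1 - μ) * (u ⬝ᵥ Mbe.mulVec u) :=
      mul_pos (by linarith) hMbe0
    rw [key] at hMe0
    nlinarith [hMe0, hfin]
end

section
/- Let $n, m \ge 1$. Let $K, M$ be real $n\times n$ matrices, $\omega \in \mathbb{R}^n$, $N_b$ a real $n\times m$ matrix, $M_b$ a real $m\times m$ matrix, and $\beta, s \in \mathbb{R}$. Define $K_e = \begin{pmatrix} K & \omega \\ \omega^T & 0 \end{pmatrix}$, $M_e = \begin{pmatrix} M & 0 \\ 0 & 0 \end{pmatrix}$, $Z_e = \begin{pmatrix} 0 & \omega \\ 0 & 0 \end{pmatrix}$, $N_{be} = \begin{pmatrix} N_b & 0 \\ 0 & 0 \end{pmatrix}$, $M_{be} = \begin{pmatrix} \beta M_b & 0 \\ 0 & s \end{pmatrix}$, and assume $K_e$ is invertible, $\beta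 M_b$ is invertible, and $s \ne 0$. Consider the $(2n+m+3)\times(2n+m+3)$ permuted extended saddle point matrix $\mathcal{A} = \begin{pmatrix} K_e & -N_{be} & 0 \\ Z_e^T & M_{be} & -N_{be}^T \\ M_e & Z_e & K_e \end{pmatrix}$ and the block triangular preconditioner $\widehat{\mathcal{P}}_2 = \begin{pmatrix} K_e & -N_{be} & 0 \\ 0 & M_{be} & -N_{be}^T \\ 0 & 0 & K_e \end{pmatrix}$. Then $\widehat{\mathcal{P}}_2$ is invertible and $(X-1)^{2n+2}$ divides the characteristic polynomial of the preconditioned matrix $\widehat{\mathcal{P}}_2^{-1}\mathcal{A}$; that is, $1$ is an eigenvalue of $\widehat{\mathcal{P}}_2^{-1}\mathcal{A}$ with algebraic multiplicity at least $2n+2$. -/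
open Matrix Polynomial

set_option maxRecDepth 10000 in
theorem stmt_13 (n m : ℕ) (hn : 1 ≤ n) (hm : 1 ≤ m)
    (K M : Matrix (Fin n) (Fin n) ℝ) (ω : Fin n → ℝ)
    (Nb : Matrix (Fin n) (Fin m) ℝ) (Mb : Matrix (Fin m) (Fin m) ℝ)
    (β s : ℝ)
    (Ke Me : Matrix (Fin n ⊕ Fin 1) (Fin n ⊕ Fin 1) ℝ)
    (hKe : Ke = Matrix.fromBlocks K (Matrix.replicateCol (Fin 1) ω) (Matrix.replicateRow (Fin 1) ω) 0)
    (hMe : Me = Matrix.fromBlocks M 0 0 0)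
    (Ze Nbe : Matrix (Fin n ⊕ Fin 1) (Fin m ⊕ Fin 1) ℝ)
    (hZe : Ze = Matrix.fromBlocks 0 (Matrix.replicateCol (Fin 1) ω) 0 0)
    (hNbe : Nbe = Matrix.fromBlocks Nb 0 0 0)
    (Mbe : Matrix (Fin m ⊕ Fin 1) (Fin m ⊕ Fin 1) ℝ)
    (hMbe : Mbe = Matrix.fromBlocks (β • Mb) 0 0 (s • (1 : Matrix (Fin 1) (Fin 1) ℝ)))
    (hKeInv : IsUnit Ke) (hMbInv : IsUnit (β • Mb)) (hs : s ≠ 0)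
    (calA P2 : Matrix ((Fin n ⊕ Fin 1) ⊕ ((Fin m ⊕ Fin 1) ⊕ (Fin n ⊕ Fin 1)))
                      ((Fin n ⊕ Fin 1) ⊕ ((Fin m ⊕ Fin 1) ⊕ (Fin n ⊕ Fin 1))) ℝ)
    (hcalA : calA = Matrix.fromBlocks
      Ke (Matrix.fromCols (-Nbe) 0)
      (Matrix.fromRows Zeᵀ Me) (Matrix.fromBlocks Mbe (-Nbeᵀ) Ze Ke))
    (hP2 : P2 = Matrix.fromBlocks
      Ke (Matrix.fromCols (-Nbe) 0)
      0 (Matrix.fromBlocks Mbe (-Nbeᵀ) 0 Ke)) :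
    IsUnit P2 ∧ (X - 1) ^ (2 * n + 2) ∣ (P2⁻¹ * calA).charpoly := by
  classical
  have hKedet : IsUnit Ke.det := (Matrix.isUnit_iff_isUnit_det _).mp hKeInv
  have hMbedet : IsUnit Mbe.det := by
    have h2 : (s • (1 : Matrix (Fin 1) (Fin 1) ℝ)).det = s := by
      simp
    rw [hMbe, Matrix.det_fromBlocks_zero₂₁, h2]
    exact ((Matrix.isUnit_iff_isUnit_det _).mp hMbInv).mul hs.isUnit
  have hP2det : IsUnit P2.det := by
    rw [hP2, Matrix.det_fromBlocks_zero₂₁, Matrix.det_fromBlocks_zero₂₁]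
    exact hKedet.mul (hMbedet.mul hKedet)
  have hP2unit : IsUnit P2 := (Matrix.isUnit_iff_isUnit_det _).mpr hP2det
  refine ⟨hP2unit, ?_⟩
  set d1 : ((Fin n ⊕ Fin 1) ⊕ ((Fin m ⊕ Fin 1) ⊕ (Fin n ⊕ Fin 1))) → ℝ[X] :=
    Sum.elim (fun _ => (X : ℝ[X]) - 1) (fun _ => 1) with hd1
  set d3 : ((Fin n ⊕ Fin 1) ⊕ ((Fin m ⊕ Fin 1) ⊕ (Fin n ⊕ Fin 1))) → ℝ[X] :=
    Sum.elim (fun _ => (1 : ℝ[X]))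
      (Sum.elim (fun _ => (1 : ℝ[X])) (fun _ => (X : ℝ[X]) - 1)) with hd3
  set H : Matrix ((Fin n ⊕ Fin 1) ⊕ ((Fin m ⊕ Fin 1) ⊕ (Fin n ⊕ Fin 1)))
      ((Fin n ⊕ Fin 1) ⊕ ((Fin m ⊕ Fin 1) ⊕ (Fin n ⊕ Fin 1))) ℝ[X] :=
    Matrix.fromBlocks (Ke.map C)
      ((Matrix.fromCols (-Nbe) 0).map C)
      ((-(Matrix.fromRows Zeᵀ Me)).map C)
      (Matrix.fromBlocks (((X : ℝ[X]) - 1) • Mbe.map C) ((-Nbeᵀ).map C)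
        ((-Ze).map C) (Ke.map C)) with hH
  have hfact : (X : ℝ[X]) • P2.map C - calA.map C =
      Matrix.diagonal d1 * H * Matrix.diagonal d3 := by
    refine Matrix.ext fun i j => ?_
    rcases i with (i | i | i) <;> rcases j with (j | j | j) <;>
      (simp [Matrix.diagonal_mul, Matrix.mul_diagonal, hP2, hcalA, hd1, hd3, hH,
        Matrix.sub_apply, Matrix.smul_apply, Matrix.map_apply]; try ring)
  have hQ : P2 * (P2⁻¹ * calA) = calA := by
    rw [← mul_assoc, Matrix.mul_nonsing_inv P2 hP2det, one_mul]
  have hmul : P2.map C * charmatrix (P2⁻¹ * calA) =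
      (X : ℝ[X]) • P2.map C - calA.map C := by
    rw [charmatrix, RingHom.mapMatrix_apply, mul_sub, ← Matrix.map_mul, hQ]
    congr 1
    refine Matrix.ext fun i j => ?_
    simp only [Matrix.scalar_apply, Matrix.mul_diagonal, Matrix.smul_apply,
      Matrix.map_apply, smul_eq_mul]
    exact mul_comm _ _
  have hdetd1 : (Matrix.diagonal d1).det = ((X : ℝ[X]) - 1) ^ (n + 1) := by
    rw [Matrix.det_diagonal, Fintype.prod_sum_type]
    simp [hd1, Finset.prod_const]
  have hdetd3 : (Matrix.diagonal d3).det = ((X : ℝ[X]) - 1) ^ (n + 1) := by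
    rw [Matrix.det_diagonal, Fintype.prod_sum_type]
    simp [hd3, Finset.prod_const, Fintype.prod_sum_type]
  have hCdet : (P2.map (C : ℝ →+* ℝ[X])).det = C P2.det := by
    rw [← RingHom.mapMatrix_apply, ← RingHom.map_det]
  have hdeteq : C P2.det * (P2⁻¹ * calA).charpoly =
      ((X : ℝ[X]) - 1) ^ (2 * n + 2) * H.det := by
    have h := congrArg Matrix.det hmul
    rw [Matrix.det_mul, hfact, Matrix.det_mul, Matrix.det_mul, hdetd1, hdetd3] at h
    rw [Matrix.charpoly, ← hCdet, h]
    ring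
  have hdvd : ((X : ℝ[X]) - 1) ^ (2 * n + 2) ∣ C P2.det * (P2⁻¹ * calA).charpoly := by
    rw [hdeteq]; exact Dvd.intro _ rfl
  obtain ⟨u, hu⟩ := (Polynomial.isUnit_C.mpr hP2det)
  refine hdvd.trans ⟨(↑u⁻¹ : ℝ[X]), ?_⟩
  rw [← hu, mul_comm (↑u : ℝ[X]), mul_assoc, Units.mul_inv, mul_one]
end
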